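/- arXiv:1806.07144 — 6 statements merged into one kernel-verified Lean document; each statement's English description precedes it below -/
import Mathlib

section
/- Let A be an action space and L : A × Ω → ℝ∪{±∞} a loss function such that for each P in a class P of probability measures there is a Bayes act a_P ∈ A with ∫ L(a_P,ω) dP(ω) ≤ ∫ L(a,ω) dP(ω) for all a ∈ A. Then S*(P,ω) := L(a_P,ω) is a proper scoring rule relative to P. -/
open MeasureTheory

/-- Bayes act construction (Grünwald–Dawid): given a loss `L : A × Ω → ℝ` and a
Bayes act `act P ∈ A` for each `P` in a class `𝒞` of probability measures, the
scoring rule `S*(P,ω) := L (act P) ω` is proper relative to `𝒞`. -/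
theorem bayes_act_proper {Ω A : Type*} [MeasurableSpace Ω]
    (𝒞 : Set (Measure Ω)) (hprob : ∀ P ∈ 𝒞, IsProbabilityMeasure P)
    (L : A → Ω → ℝ)
    (act : Measure Ω → A)
    (hBayes : ∀ P ∈ 𝒞, ∀ a : A, ∫ ω, L (act P) ω ∂P ≤ ∫ ω, L a ω ∂P) :
    ∀ P ∈ 𝒞, ∀ Q ∈ 𝒞, ∫ ω, L (act Q) ω ∂Q ≤ ∫ ω, L (act P) ω ∂Q := by
  intro P _ Q hQ
  exact hBayes Q hQ (act P)
end

section
/- Let P be a probability measure on ℝ with finite fourth moment, mean μ, variance σ² > 0, and centered third moment γ. The expected value under P of the trial score S(Q,y) = (σ_Q² − (y − μ_Q)²)², viewed as a function of (μ_Q, σ_Q²) ∈ ℝ × [0,∞), is minimized at μ_Q = μ + γ/(2σ²) and σ_Q² = σ²(1 + γ²/(4σ⁶)). -/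
open MeasureTheory

/-- Example 3 (spread-error score). For `P` with finite fourth moment, mean `μ`,
variance `σ² > 0`, and centered third moment `γ`, the expected trial score
`∫ (v − (y − m)²)² dP(y)` over `(m, v) ∈ ℝ × [0,∞)` is minimized at
`m = μ + γ/(2σ²)` and `v = σ²(1 + γ²/(4σ⁶))`. -/
theorem trial_score_bayes_act
    (P : Measure ℝ) (hP : IsProbabilityMeasure P)
    (h4 : Integrable (fun y => y ^ 4) P)
    (μ σ2 γ : ℝ)
    (hμ : μ = ∫ y, y ∂P)
    (hσ2 : σ2 = ∫ y, (y - μ) ^ 2 ∂P) (hσ2pos : 0 < σ2)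
    (hγ : γ = ∫ y, (y - μ) ^ 3 ∂P) :
    ∀ m : ℝ, ∀ v : ℝ, 0 ≤ v →
      ∫ y, (σ2 * (1 + γ ^ 2 / (4 * σ2 ^ 3)) -
          (y - (μ + γ / (2 * σ2))) ^ 2) ^ 2 ∂P
        ≤ ∫ y, (v - (y - m) ^ 2) ^ 2 ∂P := by
  intro m v hv
  have hmeas : ∀ k : ℕ, AEStronglyMeasurable (fun y : ℝ => y ^ k) P :=
    fun k => (measurable_id.pow_const k).aestronglyMeasurable
  have hpow : ∀ k : ℕ, k ≤ 4 → Integrable (fun y : ℝ => y ^ k) P := by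
    intro k hk
    have hb : Integrable (fun y : ℝ => 1 + y ^ 4) P := (integrable_const 1).add h4
    refine hb.mono (hmeas k) (Filter.Eventually.of_forall fun y => ?_)
    have hy4 : (0:ℝ) ≤ y ^ 4 := by positivity
    have h1 : |y| ^ k ≤ 1 + y ^ 4 := by
      rcases le_total (|y|) 1 with h | h
      · have h0 : |y| ^ k ≤ 1 := pow_le_one₀ (abs_nonneg y) h
        linarith
      · calc |y| ^ k ≤ |y| ^ 4 := pow_le_pow_right₀ h hk
          _ = y ^ 4 := by
              rw [← abs_pow]; exact abs_of_nonneg hy4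
          _ ≤ 1 + y ^ 4 := by linarith
    calc ‖y ^ k‖ = |y| ^ k := by rw [Real.norm_eq_abs, abs_pow]
      _ ≤ 1 + y ^ 4 := h1
      _ = ‖1 + y ^ 4‖ := by rw [Real.norm_eq_abs, abs_of_nonneg (by linarith)]
  have hI : ∀ a b c d e : ℝ,
      ∫ y, (a * y ^ 4 + b * y ^ 3 + c * y ^ 2 + d * y + e) ∂P
        = a * (∫ y, y ^ 4 ∂P) + b * (∫ y, y ^ 3 ∂P) + c * (∫ y, y ^ 2 ∂P)
          + d * (∫ y, y ∂P) + e := by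
    intro a b c d e
    have i4 := (hpow 4 le_rfl).const_mul a
    have i3 := (hpow 3 (by norm_num)).const_mul b
    have i2 := (hpow 2 (by norm_num)).const_mul c
    have i1 : Integrable (fun y : ℝ => d * y) P := by
      simpa [pow_one] using (hpow 1 (by norm_num)).const_mul d
    have j1 : Integrable (fun y : ℝ => a * y ^ 4 + b * y ^ 3) P := i4.add i3
    have j2 : Integrable (fun y : ℝ => a * y ^ 4 + b * y ^ 3 + c * y ^ 2) P := j1.add i2
    have j3 : Integrable (fun y : ℝ => a * y ^ 4 + b * y ^ 3 + c * y ^ 2 + d * y) P := j2.add i1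
    rw [integral_add j3 (integrable_const e),
        integral_add j2 i1,
        integral_add j1 i2, integral_add i4 i3,
        integral_const_mul, integral_const_mul, integral_const_mul, integral_const_mul,
        integral_const]
    simp [measure_univ]
  have ha1 : (∫ y, y ∂P) = μ := hμ.symm
  have hy1 : (∫ y, y ^ 1 ∂P) = μ := by simpa [pow_one] using ha1
  have ha2 : (∫ y, y ^ 2 ∂P) = σ2 + μ ^ 2 := by
    have : (fun y : ℝ => (y - μ) ^ 2)
        = fun y => 0 * y ^ 4 + 0 * y ^ 3 + 1 * y ^ 2 + (-2 * μ) * y + μ ^ 2 := by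
      funext y; ring
    rw [hσ2, this, hI, ha1]; ring
  have ha3 : (∫ y, y ^ 3 ∂P) = γ + 3 * μ * σ2 + μ ^ 3 := by
    have : (fun y : ℝ => (y - μ) ^ 3)
        = fun y => 0 * y ^ 4 + 1 * y ^ 3 + (-3 * μ) * y ^ 2 + (3 * μ ^ 2) * y + (-μ ^ 3) := by
      funext y; ring
    rw [hγ, this, hI, ha1, ha2]; ring
  have hF : ∀ m' v' : ℝ, ∫ y, (v' - (y - m') ^ 2) ^ 2 ∂P
      = (∫ y, y ^ 4 ∂P) + (-4 * m') * (γ + 3 * μ * σ2 + μ ^ 3)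
        + (6 * m' ^ 2 - 2 * v') * (σ2 + μ ^ 2)
        + (4 * m' * v' - 4 * m' ^ 3) * μ + (m' ^ 4 - 2 * v' * m' ^ 2 + v' ^ 2) := by
    intro m' v'
    have : (fun y : ℝ => (v' - (y - m') ^ 2) ^ 2)
        = fun y => 1 * y ^ 4 + (-4 * m') * y ^ 3 + (6 * m' ^ 2 - 2 * v') * y ^ 2
            + (4 * m' * v' - 4 * m' ^ 3) * y + (m' ^ 4 - 2 * v' * m' ^ 2 + v' ^ 2) := by
      funext y; ring
    rw [this, hI, ha1, ha2, ha3]; ring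
  rw [hF m v, hF (μ + γ / (2 * σ2)) (σ2 * (1 + γ ^ 2 / (4 * σ2 ^ 3)))]
  have hne : σ2 ≠ 0 := ne_of_gt hσ2pos
  have key :
      ((∫ y, y ^ 4 ∂P) + (-4 * m) * (γ + 3 * μ * σ2 + μ ^ 3)
        + (6 * m ^ 2 - 2 * v) * (σ2 + μ ^ 2)
        + (4 * m * v - 4 * m ^ 3) * μ + (m ^ 4 - 2 * v * m ^ 2 + v ^ 2))
      - ((∫ y, y ^ 4 ∂P)
        + (-4 * (μ + γ / (2 * σ2))) * (γ + 3 * μ * σ2 + μ ^ 3)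
        + (6 * (μ + γ / (2 * σ2)) ^ 2 - 2 * (σ2 * (1 + γ ^ 2 / (4 * σ2 ^ 3)))) * (σ2 + μ ^ 2)
        + (4 * (μ + γ / (2 * σ2)) * (σ2 * (1 + γ ^ 2 / (4 * σ2 ^ 3)))
            - 4 * (μ + γ / (2 * σ2)) ^ 3) * μ
        + ((μ + γ / (2 * σ2)) ^ 4
            - 2 * (σ2 * (1 + γ ^ 2 / (4 * σ2 ^ 3))) * (μ + γ / (2 * σ2)) ^ 2
            + (σ2 * (1 + γ ^ 2 / (4 * σ2 ^ 3))) ^ 2))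
      = (v - σ2 - (m - μ) ^ 2) ^ 2 + (2 * σ2 * (m - μ) - γ) ^ 2 / σ2 := by
    field_simp
    ring
  have h1 : 0 ≤ (v - σ2 - (m - μ) ^ 2) ^ 2 := sq_nonneg _
  have h2 : 0 ≤ (2 * σ2 * (m - μ) - γ) ^ 2 / σ2 := by positivity
  linarith [key]
end

section
/- Let P be a probability measure on ℝ with finite second moment, mean μ_P and variance σ_P². The expected value under P of S(Q,y) = (y − μ_Q)² + σ_Q², as a function of (μ_Q, σ_Q²) ∈ ℝ × [0,∞), is minimized uniquely at μ_Q = μ_P and σ_Q² = 0; in particular the predictive model choice criterion S is improper whenever σ_P² > 0. -/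
open MeasureTheory

/-- Example 4 (predictive model choice criterion). For `P` with finite second
moment, mean `μ_P` and variance `σ_P²`, the expected score
`∫ ((y − m)² + v) dP(y)` over `(m, v) ∈ ℝ × [0,∞)` is minimized uniquely at
`m = μ_P`, `v = 0`; in particular the score is improper whenever `σ_P² > 0`. -/
theorem pmcc_improper
    (P : Measure ℝ) (hP : IsProbabilityMeasure P)
    (h2 : Integrable (fun y => y ^ 2) P)
    (μP σ2P : ℝ)
    (hμ : μP = ∫ y, y ∂P)
    (hσ2 : σ2P = ∫ y, (y - μP) ^ 2 ∂P) :
    (∀ m : ℝ, ∀ v : ℝ, 0 ≤ v →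
        (∫ y, (y - μP) ^ 2 ∂P) + 0 ≤ (∫ y, (y - m) ^ 2 ∂P) + v) ∧
      (∀ m : ℝ, ∀ v : ℝ, 0 ≤ v →
        (∫ y, (y - μP) ^ 2 ∂P) + 0 = (∫ y, (y - m) ^ 2 ∂P) + v →
        m = μP ∧ v = 0) ∧
      (0 < σ2P →
        (∫ y, (y - μP) ^ 2 ∂P) + 0 < (∫ y, (y - μP) ^ 2 ∂P) + σ2P) := by
  have h1 : Integrable (fun y : ℝ => y) P := by
    have hb : Integrable (fun y : ℝ => y ^ 2 + 1) P := h2.add (integrable_const 1)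
    refine hb.mono (measurable_id.aestronglyMeasurable) ?_
    filter_upwards with y
    have h := abs_nonneg y
    have : |y| ≤ y ^ 2 + 1 := by nlinarith [sq_nonneg (|y| - 1), sq_abs y]
    simpa [abs_of_nonneg (by positivity : (0:ℝ) ≤ y ^ 2 + 1)] using this
  have key : ∀ m : ℝ, ∫ y, (y - m) ^ 2 ∂P
      = ∫ y, y ^ 2 ∂P - 2 * m * (∫ y, y ∂P) + m ^ 2 := by
    intro m
    have he : ∀ y : ℝ, (y - m) ^ 2 = y ^ 2 + (-2 * m) * y + m ^ 2 := by
      intro y; ring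
    simp_rw [he]
    have hi2 : Integrable (fun y : ℝ => -2 * m * y) P := h1.const_mul _
    have hi1 : Integrable (fun y : ℝ => y ^ 2 + -2 * m * y) P := h2.add hi2
    rw [integral_add hi1 (integrable_const _), integral_add h2 hi2,
      MeasureTheory.integral_const_mul, integral_const]
    simp [measure_univ]
    ring
  have hdiff : ∀ m : ℝ, ∫ y, (y - m) ^ 2 ∂P
      = (∫ y, (y - μP) ^ 2 ∂P) + (m - μP) ^ 2 := by
    intro m
    rw [key m, key μP, hμ]
    ring
  refine ⟨?_, ?_, ?_⟩
  · intro m v hv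
    rw [hdiff m]
    nlinarith [sq_nonneg (m - μP)]
  · intro m v hv heq
    rw [hdiff m] at heq
    constructor
    · nlinarith [sq_nonneg (m - μP)]
    · nlinarith [sq_nonneg (m - μP)]
  · intro h
    linarith
end

section
/- Let P, Q, Φ be cumulative distribution functions on ℝ with finite first moments. Then ∫∫ (P(x) − Φ(x−y))² dQ(y) dx = ∫∫ (P(x) − 1_{y≤x})² d(Q*Φ)(y) dx − ∫ Φ(x)(1 − Φ(x)) dx, where Q*Φ denotes the convolution of Q and Φ. -/
open MeasureTheory
open scoped MeasureTheory ENNReal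

namespace NoisyCRPSAux

lemma meas_toReal_le_one (μ : Measure ℝ) [IsProbabilityMeasure μ] (s : Set ℝ) :
    (μ s).toReal ≤ 1 := by
  have h := prob_le_one (μ := μ) (s := s)
  simpa using ENNReal.toReal_mono ENNReal.one_ne_top h

lemma ofReal_one_sub (μ : Measure ℝ) [IsProbabilityMeasure μ] (t : ℝ) :
    ENNReal.ofReal (1 - (μ (Set.Iic t)).toReal) = μ (Set.Ioi t) := by
  have h : μ (Set.Ioi t) = 1 - μ (Set.Iic t) := by
    rw [← Set.compl_Iic]
    exact prob_compl_eq_one_sub measurableSet_Iic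
  have h2 : (1 : ℝ) - (μ (Set.Iic t)).toReal = ((1 : ℝ≥0∞) - μ (Set.Iic t)).toReal := by
    rw [ENNReal.toReal_sub_of_le prob_le_one ENNReal.one_ne_top, ENNReal.toReal_one]
  rw [h, h2, ENNReal.ofReal_toReal (ENNReal.sub_ne_top ENNReal.one_ne_top)]

lemma tail_Iic (μ : Measure ℝ) [IsProbabilityMeasure μ] (y : ℝ) :
    ∫⁻ t in Set.Iic (0:ℝ), μ (Set.Iic (t - y)) ≤
      (∫⁻ z, ENNReal.ofReal |z| ∂μ) + ENNReal.ofReal |y| := by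
  have hS : MeasurableSet {p : ℝ × ℝ | p.2 + y ≤ p.1} :=
    measurableSet_le (measurable_snd.add_const y) measurable_fst
  have h1 : ∀ t : ℝ, μ (Set.Iic (t - y))
      = ∫⁻ z, Set.indicator {p : ℝ × ℝ | p.2 + y ≤ p.1} (1 : ℝ × ℝ → ℝ≥0∞) (t, z) ∂μ := by
    intro t
    rw [← lintegral_indicator_one measurableSet_Iic]
    refine lintegral_congr fun z => ?_
    simp [Set.indicator_apply, Set.mem_Iic, le_sub_iff_add_le]
  calc ∫⁻ t in Set.Iic (0:ℝ), μ (Set.Iic (t - y))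
      = ∫⁻ t in Set.Iic (0:ℝ), ∫⁻ z, Set.indicator {p : ℝ × ℝ | p.2 + y ≤ p.1}
          (1 : ℝ × ℝ → ℝ≥0∞) (t, z) ∂μ := lintegral_congr fun t => h1 t
    _ = ∫⁻ z, (∫⁻ t in Set.Iic (0:ℝ), Set.indicator {p : ℝ × ℝ | p.2 + y ≤ p.1}
          (1 : ℝ × ℝ → ℝ≥0∞) (t, z)) ∂μ := by
        refine lintegral_lintegral_swap ?_
        exact (measurable_const.indicator hS).aemeasurable
    _ ≤ ∫⁻ z, ENNReal.ofReal (|z| + |y|) ∂μ := by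
        refine lintegral_mono fun z => ?_
        have h2 : ∀ t : ℝ, Set.indicator {p : ℝ × ℝ | p.2 + y ≤ p.1} (1 : ℝ × ℝ → ℝ≥0∞) (t, z)
            = Set.indicator (Set.Ici (z + y)) (1 : ℝ → ℝ≥0∞) t := by
          intro t; simp [Set.indicator_apply, Set.mem_Ici]
        rw [lintegral_congr h2, lintegral_indicator_one measurableSet_Ici,
          Measure.restrict_apply measurableSet_Ici, Set.Ici_inter_Iic, Real.volume_Icc]
        refine ENNReal.ofReal_le_ofReal ?_
        have h3 := neg_le_abs z
        have h4 := neg_le_abs y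
        linarith
    _ = (∫⁻ z, ENNReal.ofReal |z| ∂μ) + ENNReal.ofReal |y| := by
        simp_rw [ENNReal.ofReal_add (abs_nonneg _) (abs_nonneg _)]
        rw [lintegral_add_right _ measurable_const, lintegral_const, measure_univ, mul_one]

lemma tail_Ioi (μ : Measure ℝ) [IsProbabilityMeasure μ] (y : ℝ) :
    ∫⁻ t in Set.Ioi (0:ℝ), μ (Set.Ioi (t - y)) ≤
      (∫⁻ z, ENNReal.ofReal |z| ∂μ) + ENNReal.ofReal |y| := by
  have hS : MeasurableSet {p : ℝ × ℝ | p.1 < p.2 + y} :=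
    measurableSet_lt measurable_fst (measurable_snd.add_const y)
  have h1 : ∀ t : ℝ, μ (Set.Ioi (t - y))
      = ∫⁻ z, Set.indicator {p : ℝ × ℝ | p.1 < p.2 + y} (1 : ℝ × ℝ → ℝ≥0∞) (t, z) ∂μ := by
    intro t
    rw [← lintegral_indicator_one measurableSet_Ioi]
    refine lintegral_congr fun z => ?_
    simp [Set.indicator_apply, Set.mem_Ioi, sub_lt_iff_lt_add]
  calc ∫⁻ t in Set.Ioi (0:ℝ), μ (Set.Ioi (t - y))
      = ∫⁻ t in Set.Ioi (0:ℝ), ∫⁻ z, Set.indicator {p : ℝ × ℝ | p.1 < p.2 + y}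
          (1 : ℝ × ℝ → ℝ≥0∞) (t, z) ∂μ := lintegral_congr fun t => h1 t
    _ = ∫⁻ z, (∫⁻ t in Set.Ioi (0:ℝ), Set.indicator {p : ℝ × ℝ | p.1 < p.2 + y}
          (1 : ℝ × ℝ → ℝ≥0∞) (t, z)) ∂μ := by
        refine lintegral_lintegral_swap ?_
        exact (measurable_const.indicator hS).aemeasurable
    _ ≤ ∫⁻ z, ENNReal.ofReal (|z| + |y|) ∂μ := by
        refine lintegral_mono fun z => ?_
        have h2 : ∀ t : ℝ, Set.indicator {p : ℝ × ℝ | p.1 < p.2 + y} (1 : ℝ × ℝ → ℝ≥0∞) (t, z)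
            = Set.indicator (Set.Iio (z + y)) (1 : ℝ → ℝ≥0∞) t := by
          intro t; simp [Set.indicator_apply, Set.mem_Iio]
        rw [lintegral_congr h2, lintegral_indicator_one measurableSet_Iio,
          Measure.restrict_apply measurableSet_Iio, Set.Iio_inter_Ioi, Real.volume_Ioo]
        refine ENNReal.ofReal_le_ofReal ?_
        have h3 := le_abs_self z
        have h4 := le_abs_self y
        linarith
    _ = (∫⁻ z, ENNReal.ofReal |z| ∂μ) + ENNReal.ofReal |y| := by
        simp_rw [ENNReal.ofReal_add (abs_nonneg _) (abs_nonneg _)]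
        rw [lintegral_add_right _ measurable_const, lintegral_const, measure_univ, mul_one]

lemma conv_smooth (Q : Measure ℝ) [IsProbabilityMeasure Q] {k : ℝ → ℝ≥0∞} (hk : Measurable k) :
    (∫⁻ x, (∫⁻ y, k (x - y) ∂Q)) = ∫⁻ t, k t := by
  have hswap : (∫⁻ x, (∫⁻ y, k (x - y) ∂Q)) = ∫⁻ y, (∫⁻ x, k (x - y)) ∂Q := by
    refine lintegral_lintegral_swap ?_
    exact (hk.comp (measurable_fst.sub measurable_snd)).aemeasurable
  rw [hswap]
  calc (∫⁻ y, (∫⁻ x, k (x - y)) ∂Q) = ∫⁻ y, (∫⁻ t, k t) ∂Q :=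
        lintegral_congr fun y => lintegral_sub_right_eq_self k y
    _ = ∫⁻ t, k t := by rw [lintegral_const, measure_univ, mul_one]

lemma inner_conv (Q Φ : Measure ℝ) [IsProbabilityMeasure Q] [IsProbabilityMeasure Φ]
    {x a : ℝ} (ha0 : 0 ≤ a) (ha1 : a ≤ 1) :
    (∫⁻ y, ENNReal.ofReal ((a - if y ≤ x then (1:ℝ) else 0) ^ 2) ∂(Q.conv Φ))
      = (∫⁻ y, ENNReal.ofReal ((a - (Φ (Set.Iic (x - y))).toReal) ^ 2) ∂Q)
        + ∫⁻ y, ENNReal.ofReal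
            ((Φ (Set.Iic (x - y))).toReal * (1 - (Φ (Set.Iic (x - y))).toReal)) ∂Q := by
  have mgE : Measurable fun t : ℝ => Φ (Set.Iic t) :=
    Monotone.measurable fun s t hst => measure_mono (Set.Iic_subset_Iic.mpr hst)
  have mg : Measurable fun t : ℝ => (Φ (Set.Iic t)).toReal := ENNReal.measurable_toReal.comp mgE
  have hconv : Q.conv Φ = Measure.map (fun p : ℝ × ℝ => p.1 + p.2) (Q.prod Φ) := rfl
  have hmy : Measurable fun y : ℝ => ENNReal.ofReal ((a - if y ≤ x then (1:ℝ) else 0) ^ 2) :=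
    ((measurable_const.sub
      (Measurable.ite measurableSet_Iic measurable_const measurable_const)).pow_const
        2).ennreal_ofReal
  have hinner : ∀ u : ℝ,
      (∫⁻ v, ENNReal.ofReal ((a - if u + v ≤ x then (1:ℝ) else 0) ^ 2) ∂Φ)
        = ENNReal.ofReal ((a - (Φ (Set.Iic (x - u))).toReal) ^ 2)
          + ENNReal.ofReal
              ((Φ (Set.Iic (x - u))).toReal * (1 - (Φ (Set.Iic (x - u))).toReal)) := by
    intro u
    set b : ℝ := (Φ (Set.Iic (x - u))).toReal with hbdef
    have hb0 : (0:ℝ) ≤ b := ENNReal.toReal_nonneg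
    have hb1 : b ≤ 1 := meas_toReal_le_one Φ _
    have hIic : Φ (Set.Iic (x - u)) = ENNReal.ofReal b :=
      (ENNReal.ofReal_toReal (measure_ne_top Φ _)).symm
    have hIoi : Φ (Set.Ioi (x - u)) = ENNReal.ofReal (1 - b) := (ofReal_one_sub Φ (x - u)).symm
    have hsplit : (∫⁻ v, ENNReal.ofReal ((a - if u + v ≤ x then (1:ℝ) else 0) ^ 2) ∂Φ)
        = ENNReal.ofReal ((1 - a) ^ 2) * Φ (Set.Iic (x - u))
          + ENNReal.ofReal (a ^ 2) * Φ (Set.Ioi (x - u)) := by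
      rw [← lintegral_add_compl (μ := Φ)
        (fun v => ENNReal.ofReal ((a - if u + v ≤ x then (1:ℝ) else 0) ^ 2))
        (measurableSet_Iic (a := x - u)), Set.compl_Iic]
      congr 1
      · rw [setLIntegral_congr_fun measurableSet_Iic
          (fun v hv => ?_), setLIntegral_const]
        have hvx : u + v ≤ x := by
          have : v ≤ x - u := hv
          linarith
        rw [if_pos hvx]
        congr 1
        ring
      · rw [setLIntegral_congr_fun measurableSet_Ioi
          (fun v hv => ?_), setLIntegral_const]
        have hvx : ¬ (u + v ≤ x) := by
          have : x - u < v := hv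
          intro hc; linarith
        rw [if_neg hvx, sub_zero]
    rw [hsplit, hIic, hIoi,
      ← ENNReal.ofReal_mul (by positivity), ← ENNReal.ofReal_mul (by positivity),
      ← ENNReal.ofReal_add (mul_nonneg (sq_nonneg _) hb0)
        (mul_nonneg (sq_nonneg _) (by linarith)),
      ← ENNReal.ofReal_add (sq_nonneg _) (mul_nonneg hb0 (by linarith))]
    congr 1
    ring
  calc (∫⁻ y, ENNReal.ofReal ((a - if y ≤ x then (1:ℝ) else 0) ^ 2) ∂(Q.conv Φ))
      = ∫⁻ p : ℝ × ℝ, ENNReal.ofReal ((a - if p.1 + p.2 ≤ x then (1:ℝ) else 0) ^ 2)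
          ∂(Q.prod Φ) := by
        rw [hconv, lintegral_map hmy
          (show Measurable (fun p : ℝ × ℝ => p.1 + p.2) from measurable_fst.add measurable_snd)]
    _ = ∫⁻ u, (∫⁻ v, ENNReal.ofReal ((a - if u + v ≤ x then (1:ℝ) else 0) ^ 2) ∂Φ) ∂Q :=
        lintegral_prod (fun p => ENNReal.ofReal ((a - if p.1 + p.2 ≤ x then (1:ℝ) else 0) ^ 2))
          (((measurable_const.sub (Measurable.ite
              (measurableSet_le (measurable_fst.add measurable_snd) measurable_const)
              measurable_const measurable_const)).pow_const 2).ennreal_ofReal).aemeasurable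
    _ = ∫⁻ u, (ENNReal.ofReal ((a - (Φ (Set.Iic (x - u))).toReal) ^ 2)
          + ENNReal.ofReal
              ((Φ (Set.Iic (x - u))).toReal * (1 - (Φ (Set.Iic (x - u))).toReal))) ∂Q :=
        lintegral_congr hinner
    _ = _ := lintegral_add_left
        (f := fun u => ENNReal.ofReal ((a - (Φ (Set.Iic (x - u))).toReal) ^ 2))
        (by exact ((measurable_const.sub
          (mg.comp (measurable_const.sub measurable_id))).pow_const 2).ennreal_ofReal) _

end NoisyCRPSAux

open NoisyCRPSAux

/-- Example 6: for probability measures `P, Q, Φ` on `ℝ` with finite first moments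
and CDFs `F_P, F_Q, F_Φ`, one has
`∫∫ (F_P(x) − F_Φ(x−y))² dQ(y) dx
  = ∫∫ (F_P(x) − 1_{y≤x})² d(Q∗Φ)(y) dx − ∫ F_Φ(x)(1−F_Φ(x)) dx`. -/
theorem noisy_crps_identity
    (P Q Φ : Measure ℝ)
    (hP : IsProbabilityMeasure P) (hQ : IsProbabilityMeasure Q)
    (hΦ : IsProbabilityMeasure Φ)
    (hP1 : Integrable (fun y : ℝ => y) P)
    (hQ1 : Integrable (fun y : ℝ => y) Q)
    (hΦ1 : Integrable (fun y : ℝ => y) Φ) :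
    ∫ x : ℝ, (∫ y, ((P (Set.Iic x)).toReal - (Φ (Set.Iic (x - y))).toReal) ^ 2 ∂Q)
      = (∫ x : ℝ, (∫ y, ((P (Set.Iic x)).toReal - (if y ≤ x then (1:ℝ) else 0)) ^ 2
            ∂(Q.conv Φ)))
        - ∫ x : ℝ, (Φ (Set.Iic x)).toReal * (1 - (Φ (Set.Iic x)).toReal) := by
  classical
  -- measurability of the CDFs
  have mPE : Measurable fun t : ℝ => P (Set.Iic t) :=
    Monotone.measurable fun s t hst => measure_mono (Set.Iic_subset_Iic.mpr hst)
  have mF : Measurable fun t : ℝ => (P (Set.Iic t)).toReal := ENNReal.measurable_toReal.comp mPE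
  have mgE : Measurable fun t : ℝ => Φ (Set.Iic t) :=
    Monotone.measurable fun s t hst => measure_mono (Set.Iic_subset_Iic.mpr hst)
  have mg : Measurable fun t : ℝ => (Φ (Set.Iic t)).toReal := ENNReal.measurable_toReal.comp mgE
  have mPoiE : Measurable fun t : ℝ => P (Set.Ioi t) :=
    Antitone.measurable fun s t hst => measure_mono (Set.Ioi_subset_Ioi hst)
  -- basic bounds
  have hF0 : ∀ x : ℝ, (0:ℝ) ≤ (P (Set.Iic x)).toReal := fun _ => ENNReal.toReal_nonneg
  have hF1 : ∀ x : ℝ, (P (Set.Iic x)).toReal ≤ 1 := fun x => meas_toReal_le_one P _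
  have hg0 : ∀ t : ℝ, (0:ℝ) ≤ (Φ (Set.Iic t)).toReal := fun _ => ENNReal.toReal_nonneg
  have hg1 : ∀ t : ℝ, (Φ (Set.Iic t)).toReal ≤ 1 := fun t => meas_toReal_le_one Φ _
  -- first moments in lintegral form
  have hMP : (∫⁻ z, ENNReal.ofReal |z| ∂P) ≠ ∞ := by
    have h := hP1.hasFiniteIntegral
    rw [hasFiniteIntegral_iff_norm] at h
    simpa [Real.norm_eq_abs] using h.ne
  have hMQ : (∫⁻ z, ENNReal.ofReal |z| ∂Q) ≠ ∞ := by
    have h := hQ1.hasFiniteIntegral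
    rw [hasFiniteIntegral_iff_norm] at h
    simpa [Real.norm_eq_abs] using h.ne
  have hMΦ : (∫⁻ z, ENNReal.ofReal |z| ∂Φ) ≠ ∞ := by
    have h := hΦ1.hasFiniteIntegral
    rw [hasFiniteIntegral_iff_norm] at h
    simpa [Real.norm_eq_abs] using h.ne
  -- the lintegral versions of the three inner integrals
  set J1 : ℝ → ℝ≥0∞ := fun x => ∫⁻ y, ENNReal.ofReal
      (((P (Set.Iic x)).toReal - if y ≤ x then (1:ℝ) else 0) ^ 2) ∂(Q.conv Φ) with hJ1def
  set J2 : ℝ → ℝ≥0∞ := fun x => ∫⁻ y, ENNReal.ofReal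
      (((P (Set.Iic x)).toReal - (Φ (Set.Iic (x - y))).toReal) ^ 2) ∂Q with hJ2def
  set J3 : ℝ → ℝ≥0∞ := fun x => ∫⁻ y, ENNReal.ofReal
      ((Φ (Set.Iic (x - y))).toReal * (1 - (Φ (Set.Iic (x - y))).toReal)) ∂Q with hJ3def
  set L : ℝ≥0∞ := ∫⁻ t, ENNReal.ofReal
      ((Φ (Set.Iic t)).toReal * (1 - (Φ (Set.Iic t)).toReal)) with hLdef
  -- measurability of J1, J2, J3
  have mJ1 : Measurable J1 := by
    simp only [hJ1def]
    exact Measurable.lintegral_prod_right'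
      (f := fun p : ℝ × ℝ => ENNReal.ofReal
        (((P (Set.Iic p.1)).toReal - if p.2 ≤ p.1 then (1:ℝ) else 0) ^ 2))
      (by exact (((mF.comp measurable_fst).sub (Measurable.ite
        (measurableSet_le measurable_snd measurable_fst) measurable_const
        measurable_const)).pow_const 2).ennreal_ofReal)
  have mJ2 : Measurable J2 := by
    simp only [hJ2def]
    exact Measurable.lintegral_prod_right'
      (f := fun p : ℝ × ℝ => ENNReal.ofReal
        (((P (Set.Iic p.1)).toReal - (Φ (Set.Iic (p.1 - p.2))).toReal) ^ 2))
      (by exact (((mF.comp measurable_fst).sub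
        (mg.comp (measurable_fst.sub measurable_snd))).pow_const 2).ennreal_ofReal)
  -- pointwise bounds on J1, J2
  have hJ1le : ∀ x, J1 x ≤ 1 := by
    intro x
    simp only [hJ1def]
    calc (∫⁻ y, ENNReal.ofReal
          (((P (Set.Iic x)).toReal - if y ≤ x then (1:ℝ) else 0) ^ 2) ∂(Q.conv Φ))
        ≤ ∫⁻ _, 1 ∂(Q.conv Φ) := by
          refine lintegral_mono fun y => ?_
          rw [show (1:ℝ≥0∞) = ENNReal.ofReal (1:ℝ) by simp]
          refine ENNReal.ofReal_le_ofReal ?_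
          split_ifs <;> nlinarith [hF0 x, hF1 x]
      _ = 1 := by simp
  have hJ2le : ∀ x, J2 x ≤ 1 := by
    intro x
    simp only [hJ2def]
    calc (∫⁻ y, ENNReal.ofReal
          (((P (Set.Iic x)).toReal - (Φ (Set.Iic (x - y))).toReal) ^ 2) ∂Q)
        ≤ ∫⁻ _, 1 ∂Q := by
          refine lintegral_mono fun y => ?_
          rw [show (1:ℝ≥0∞) = ENNReal.ofReal (1:ℝ) by simp]
          refine ENNReal.ofReal_le_ofReal ?_
          nlinarith [hF0 x, hF1 x, hg0 (x - y), hg1 (x - y)]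
      _ = 1 := by simp
  -- conversion of the three Bochner integrals to lintegrals
  have E2 : (∫ x : ℝ, (∫ y, ((P (Set.Iic x)).toReal - (Φ (Set.Iic (x - y))).toReal) ^ 2 ∂Q))
      = (∫⁻ x, J2 x).toReal := by
    have e2 : ∀ x : ℝ,
        (∫ y, ((P (Set.Iic x)).toReal - (Φ (Set.Iic (x - y))).toReal) ^ 2 ∂Q)
          = (J2 x).toReal := by
      intro x
      simp only [hJ2def]
      exact integral_eq_lintegral_of_nonneg_ae (ae_of_all _ fun y => sq_nonneg _)
        (by exact ((measurable_const.sub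
          (mg.comp (measurable_const.sub measurable_id))).pow_const 2).aestronglyMeasurable)
    simp only [e2]
    rw [integral_eq_lintegral_of_nonneg_ae (ae_of_all _ fun x => ENNReal.toReal_nonneg)
      (ENNReal.measurable_toReal.comp mJ2).aestronglyMeasurable]
    congr 1
    exact lintegral_congr fun x =>
      ENNReal.ofReal_toReal (ne_top_of_le_ne_top ENNReal.one_ne_top (hJ2le x))
  have E1 : (∫ x : ℝ, (∫ y, ((P (Set.Iic x)).toReal - (if y ≤ x then (1:ℝ) else 0)) ^ 2
        ∂(Q.conv Φ)))
      = (∫⁻ x, J1 x).toReal := by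
    have e1 : ∀ x : ℝ,
        (∫ y, ((P (Set.Iic x)).toReal - (if y ≤ x then (1:ℝ) else 0)) ^ 2 ∂(Q.conv Φ))
          = (J1 x).toReal := by
      intro x
      simp only [hJ1def]
      exact integral_eq_lintegral_of_nonneg_ae (ae_of_all _ fun y => sq_nonneg _)
        (by exact ((measurable_const.sub (Measurable.ite measurableSet_Iic measurable_const
          measurable_const)).pow_const 2).aestronglyMeasurable)
    simp only [e1]
    rw [integral_eq_lintegral_of_nonneg_ae (ae_of_all _ fun x => ENNReal.toReal_nonneg)
      (ENNReal.measurable_toReal.comp mJ1).aestronglyMeasurable]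
    congr 1
    exact lintegral_congr fun x =>
      ENNReal.ofReal_toReal (ne_top_of_le_ne_top ENNReal.one_ne_top (hJ1le x))
  have E3 : (∫ x : ℝ, (Φ (Set.Iic x)).toReal * (1 - (Φ (Set.Iic x)).toReal)) = L.toReal := by
    simp only [hLdef]
    exact integral_eq_lintegral_of_nonneg_ae
      (ae_of_all _ fun t => mul_nonneg (hg0 t) (by linarith [hg1 t]))
      (by exact (mg.mul (measurable_const.sub mg)).aestronglyMeasurable)
  -- the pointwise identity
  have hpoint : ∀ x : ℝ, J1 x = J2 x + J3 x := by
    intro x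
    simp only [hJ1def, hJ2def, hJ3def]
    exact inner_conv Q Φ (hF0 x) (hF1 x)
  -- the J3 total integral
  have hJ3sum : (∫⁻ x, J3 x) = L := by
    simp only [hJ3def, hLdef]
    exact conv_smooth Q
      (k := fun t => ENNReal.ofReal ((Φ (Set.Iic t)).toReal * (1 - (Φ (Set.Iic t)).toReal)))
      (by exact (mg.mul (measurable_const.sub mg)).ennreal_ofReal)
  -- finiteness of L
  have hLne : L ≠ ∞ := by
    simp only [hLdef]
    rw [← lintegral_add_compl (fun t => ENNReal.ofReal
      ((Φ (Set.Iic t)).toReal * (1 - (Φ (Set.Iic t)).toReal)))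
      (measurableSet_Iic (a := (0:ℝ))), Set.compl_Iic]
    refine ENNReal.add_ne_top.mpr ⟨?_, ?_⟩
    · have hb : ∀ t : ℝ, ENNReal.ofReal
          ((Φ (Set.Iic t)).toReal * (1 - (Φ (Set.Iic t)).toReal)) ≤ Φ (Set.Iic (t - 0)) := by
        intro t
        rw [sub_zero]
        calc ENNReal.ofReal ((Φ (Set.Iic t)).toReal * (1 - (Φ (Set.Iic t)).toReal))
            ≤ ENNReal.ofReal ((Φ (Set.Iic t)).toReal) :=
              ENNReal.ofReal_le_ofReal (by nlinarith [hg0 t, hg1 t])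
          _ = Φ (Set.Iic t) := ENNReal.ofReal_toReal (measure_ne_top Φ _)
      have h := tail_Iic Φ 0
      refine ne_top_of_le_ne_top ?_ (le_trans (lintegral_mono hb) h)
      simp only [abs_zero, ENNReal.ofReal_zero, add_zero]
      exact hMΦ
    · have hb : ∀ t : ℝ, ENNReal.ofReal
          ((Φ (Set.Iic t)).toReal * (1 - (Φ (Set.Iic t)).toReal)) ≤ Φ (Set.Ioi (t - 0)) := by
        intro t
        rw [sub_zero]
        calc ENNReal.ofReal ((Φ (Set.Iic t)).toReal * (1 - (Φ (Set.Iic t)).toReal))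
            ≤ ENNReal.ofReal (1 - (Φ (Set.Iic t)).toReal) :=
              ENNReal.ofReal_le_ofReal (by nlinarith [hg0 t, hg1 t])
          _ = Φ (Set.Ioi t) := ofReal_one_sub Φ t
      have h := tail_Ioi Φ 0
      refine ne_top_of_le_ne_top ?_ (le_trans (lintegral_mono hb) h)
      simp only [abs_zero, ENNReal.ofReal_zero, add_zero]
      exact hMΦ
  -- finiteness of ∫⁻ J2
  have hA2 : (∫⁻ x, J2 x) ≠ ∞ := by
    rw [← lintegral_add_compl (fun x => J2 x) (measurableSet_Iic (a := (0:ℝ))), Set.compl_Iic]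
    refine ENNReal.add_ne_top.mpr ⟨?_, ?_⟩
    · -- over Iic 0
      have hb : ∀ x : ℝ, J2 x ≤ P (Set.Iic x) + ∫⁻ y, Φ (Set.Iic (x - y)) ∂Q := by
        intro x
        simp only [hJ2def]
        calc (∫⁻ y, ENNReal.ofReal
              (((P (Set.Iic x)).toReal - (Φ (Set.Iic (x - y))).toReal) ^ 2) ∂Q)
            ≤ ∫⁻ y, (P (Set.Iic x) + Φ (Set.Iic (x - y))) ∂Q := by
              refine lintegral_mono fun y => ?_
              calc ENNReal.ofReal
                    (((P (Set.Iic x)).toReal - (Φ (Set.Iic (x - y))).toReal) ^ 2)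
                  ≤ ENNReal.ofReal ((P (Set.Iic x)).toReal + (Φ (Set.Iic (x - y))).toReal) :=
                    ENNReal.ofReal_le_ofReal
                      (by nlinarith [hF0 x, hF1 x, hg0 (x - y), hg1 (x - y)])
                _ = ENNReal.ofReal ((P (Set.Iic x)).toReal)
                      + ENNReal.ofReal ((Φ (Set.Iic (x - y))).toReal) :=
                    ENNReal.ofReal_add (hF0 x) (hg0 (x - y))
                _ = P (Set.Iic x) + Φ (Set.Iic (x - y)) := by
                    rw [ENNReal.ofReal_toReal (measure_ne_top P _),
                      ENNReal.ofReal_toReal (measure_ne_top Φ _)]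
          _ = P (Set.Iic x) + ∫⁻ y, Φ (Set.Iic (x - y)) ∂Q := by
              rw [lintegral_add_left measurable_const, lintegral_const, measure_univ, mul_one]
      refine ne_top_of_le_ne_top ?_ (lintegral_mono hb)
      rw [lintegral_add_left mPE]
      refine ENNReal.add_ne_top.mpr ⟨?_, ?_⟩
      · have h := tail_Iic P 0
        simp only [sub_zero, abs_zero, ENNReal.ofReal_zero, add_zero] at h
        exact ne_top_of_le_ne_top hMP h
      · have hsw : (∫⁻ x in Set.Iic (0:ℝ), ∫⁻ y, Φ (Set.Iic (x - y)) ∂Q)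
            = ∫⁻ y, (∫⁻ x in Set.Iic (0:ℝ), Φ (Set.Iic (x - y))) ∂Q := by
          refine lintegral_lintegral_swap ?_
          exact (mgE.comp (measurable_fst.sub measurable_snd)).aemeasurable
        rw [hsw]
        have hle : (∫⁻ y, (∫⁻ x in Set.Iic (0:ℝ), Φ (Set.Iic (x - y))) ∂Q)
            ≤ ∫⁻ y, ((∫⁻ z, ENNReal.ofReal |z| ∂Φ) + ENNReal.ofReal |y|) ∂Q :=
          lintegral_mono fun y => tail_Iic Φ y
        refine ne_top_of_le_ne_top ?_ hle
        rw [lintegral_add_left measurable_const, lintegral_const, measure_univ, mul_one]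
        exact ENNReal.add_ne_top.mpr ⟨hMΦ, hMQ⟩
    · -- over Ioi 0
      have hb : ∀ x : ℝ, J2 x ≤ P (Set.Ioi x) + ∫⁻ y, Φ (Set.Ioi (x - y)) ∂Q := by
        intro x
        simp only [hJ2def]
        calc (∫⁻ y, ENNReal.ofReal
              (((P (Set.Iic x)).toReal - (Φ (Set.Iic (x - y))).toReal) ^ 2) ∂Q)
            ≤ ∫⁻ y, (P (Set.Ioi x) + Φ (Set.Ioi (x - y))) ∂Q := by
              refine lintegral_mono fun y => ?_
              calc ENNReal.ofReal
                    (((P (Set.Iic x)).toReal - (Φ (Set.Iic (x - y))).toReal) ^ 2)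
                  ≤ ENNReal.ofReal ((1 - (P (Set.Iic x)).toReal)
                      + (1 - (Φ (Set.Iic (x - y))).toReal)) :=
                    ENNReal.ofReal_le_ofReal
                      (by nlinarith [hF0 x, hF1 x, hg0 (x - y), hg1 (x - y)])
                _ = ENNReal.ofReal (1 - (P (Set.Iic x)).toReal)
                      + ENNReal.ofReal (1 - (Φ (Set.Iic (x - y))).toReal) :=
                    ENNReal.ofReal_add (by linarith [hF1 x]) (by linarith [hg1 (x - y)])
                _ = P (Set.Ioi x) + Φ (Set.Ioi (x - y)) := by
                    rw [ofReal_one_sub P x, ofReal_one_sub Φ (x - y)]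
          _ = P (Set.Ioi x) + ∫⁻ y, Φ (Set.Ioi (x - y)) ∂Q := by
              rw [lintegral_add_left measurable_const, lintegral_const, measure_univ, mul_one]
      refine ne_top_of_le_ne_top ?_ (lintegral_mono hb)
      rw [lintegral_add_left mPoiE]
      refine ENNReal.add_ne_top.mpr ⟨?_, ?_⟩
      · have h := tail_Ioi P 0
        simp only [sub_zero, abs_zero, ENNReal.ofReal_zero, add_zero] at h
        exact ne_top_of_le_ne_top hMP h
      · have hsw : (∫⁻ x in Set.Ioi (0:ℝ), ∫⁻ y, Φ (Set.Ioi (x - y)) ∂Q)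
            = ∫⁻ y, (∫⁻ x in Set.Ioi (0:ℝ), Φ (Set.Ioi (x - y))) ∂Q := by
          refine lintegral_lintegral_swap ?_
          have mΦoiE : Measurable fun t : ℝ => Φ (Set.Ioi t) :=
            Antitone.measurable fun s t hst => measure_mono (Set.Ioi_subset_Ioi hst)
          exact (mΦoiE.comp (measurable_fst.sub measurable_snd)).aemeasurable
        rw [hsw]
        have hle : (∫⁻ y, (∫⁻ x in Set.Ioi (0:ℝ), Φ (Set.Ioi (x - y))) ∂Q)
            ≤ ∫⁻ y, ((∫⁻ z, ENNReal.ofReal |z| ∂Φ) + ENNReal.ofReal |y|) ∂Q :=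
          lintegral_mono fun y => tail_Ioi Φ y
        refine ne_top_of_le_ne_top ?_ hle
        rw [lintegral_add_left measurable_const, lintegral_const, measure_univ, mul_one]
        exact ENNReal.add_ne_top.mpr ⟨hMΦ, hMQ⟩
  -- conclusion
  rw [E2, E1, E3]
  have hsum : (∫⁻ x, J1 x) = (∫⁻ x, J2 x) + L := by
    rw [lintegral_congr hpoint, lintegral_add_left mJ2, hJ3sum]
  rw [hsum, ENNReal.toReal_add hA2 hLne]
  ring
end

section
/- The linear score LinS(p, y) = −p(y) on densities admits no Bayes act relative to the class of all Lebesgue probability densities: for every density q which is symmetric about 0 and strictly increasing on (−∞,0), and every density p, there exists a density p̃ with ∫ p̃(y) q(y) dy > ∫ p(y) q(y) dy; hence inf over p of LinS(p, Q) = −∫ p q is not attained. -/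
open MeasureTheory

/-- `p` is a Lebesgue probability density on `ℝ`. -/
def IsDensity (p : ℝ → ℝ) : Prop :=
  Measurable p ∧ (∀ y, 0 ≤ p y) ∧ (∫ y, p y) = 1

/-- Example 7: the linear score `LinS(p,y) = −p(y)` admits no Bayes act. For every
density `q` symmetric about `0` and strictly increasing on `(−∞,0)`, and every
density `p`, there is a density `p̃` with `∫ p̃ q > ∫ p q`; hence the infimum of
the expected linear score `−∫ p q` is not attained. -/
theorem linear_score_no_bayes_act
    (q : ℝ → ℝ) (hq : IsDensity q)
    (hsym : ∀ y, q (-y) = q y)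
    (hmono : StrictMonoOn q (Set.Iio (0:ℝ)))
    (p : ℝ → ℝ) (hp : IsDensity p)
    (hint : Integrable (fun y => p y * q y)) :
    ∃ pt : ℝ → ℝ, IsDensity pt ∧ Integrable (fun y => pt y * q y) ∧
      (∫ y, p y * q y) < ∫ y, pt y * q y := by
  obtain ⟨hqm, hq0, hq1⟩ := hq
  obtain ⟨hpm, hp0, hp1⟩ := hp
  have hqi : Integrable q := by
    by_contra h
    rw [integral_undef h] at hq1; norm_num at hq1
  have hpi : Integrable p := by
    by_contra h
    rw [integral_undef h] at hp1; norm_num at hp1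
  set c := ∫ y, p y * q y with hc
  -- Key: there is y0 < 0 with c < q y0
  have hkey : ∃ y0 < (0:ℝ), c < q y0 := by
    by_contra hcon
    push_neg at hcon
    have hneg : ∀ y : ℝ, y < 0 → q y < c := by
      intro y hy
      have h2 : q y < q (y/2) := hmono (by simpa using hy) (by simp; linarith) (by linarith)
      exact h2.trans_le (hcon _ (by linarith))
    have hlt : ∀ y : ℝ, y ≠ 0 → q y < c := by
      intro y hy
      rcases lt_or_gt_of_ne hy with h | h
      · exact hneg y h
      · have := hneg (-y) (by linarith)
        rwa [hsym y] at this
    have hae : ∀ᵐ y : ℝ, y ≠ 0 := by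
      rw [ae_iff]
      simp only [not_not]
      have : {a : ℝ | a = 0} = {0} := by ext x; simp
      rw [this, Real.volume_singleton]
    set f := fun y => c * p y - p y * q y with hf
    have hfi : Integrable f := (hpi.const_mul c).sub hint
    have hf0 : 0 ≤ᵐ[volume] f := by
      filter_upwards [hae] with y hy
      have h1 : q y < c := hlt y hy
      have := hp0 y
      simp only [hf, Pi.zero_apply]
      nlinarith
    have hsp : 0 < volume (Function.support p) := by
      by_contra h
      push_neg at h
      have h0 : volume (Function.support p) = 0 := le_antisymm (by exact le_of_not_gt (by simpa using h)) zero_le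
      have : p =ᵐ[volume] 0 := by
        rw [Filter.EventuallyEq, ae_iff]
        simpa [Function.support] using h0
      rw [integral_congr_ae this] at hp1
      simp at hp1
    have hsub : Function.support p \ {0} ⊆ Function.support f := by
      intro y hy
      obtain ⟨hy1, hy2⟩ := hy
      have hpy : 0 < p y := lt_of_le_of_ne (hp0 y) (Ne.symm hy1)
      have hqy : q y < c := hlt y (by simpa using hy2)
      simp only [Function.mem_support, hf]
      nlinarith
    have hsm : 0 < volume (Function.support f) := by
      have h1 : volume (Function.support p \ {0}) = volume (Function.support p) :=
        measure_diff_null (by simp)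
      calc 0 < volume (Function.support p) := hsp
        _ = volume (Function.support p \ {0}) := h1.symm
        _ ≤ volume (Function.support f) := measure_mono hsub
    have hpos : 0 < ∫ y, f y := by
      rw [integral_pos_iff_support_of_nonneg_ae hf0 hfi]
      exact hsm
    rw [integral_sub (hpi.const_mul c) hint, integral_const_mul, hp1] at hpos
    simp [← hc] at hpos
  obtain ⟨y0, hy0, hcy0⟩ := hkey
  set δ := -y0 with hδdef
  have hδ : 0 < δ := by simp [hδdef]; linarith
  set I := Set.Icc (-δ) δ with hI
  set pt := Set.indicator I (fun _ => (2*δ)⁻¹) with hpt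
  have h2δ : (0:ℝ) < 2*δ := by linarith
  have hvol : volume I = ENNReal.ofReal (2*δ) := by
    rw [hI, Real.volume_Icc]; ring_nf
  -- pointwise bound on I a.e.
  have hbd : ∀ y ∈ I, y ≠ 0 → q y0 ≤ q y := by
    intro y hy hy0'
    obtain ⟨h1, h2⟩ := hy
    have hmle := hmono.monotoneOn
    rcases lt_or_gt_of_ne hy0' with h | h
    · exact hmle (by simp; linarith) (by simpa using h) (by simpa [hδdef] using h1)
    · have : q y0 ≤ q (-y) :=
        hmle (by simp; linarith) (by simp; linarith) (by simp [hδdef] at h1 ⊢; linarith)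
      rwa [hsym] at this
  have hae0 : ∀ᵐ y : ℝ, y ≠ 0 := by
    rw [ae_iff]
    simp only [not_not]
    have : {a : ℝ | a = 0} = {0} := by ext x; simp
    rw [this, Real.volume_singleton]
  have hIm : MeasurableSet I := measurableSet_Icc
  have hIq : IntegrableOn q I := hqi.integrableOn
  have hIc : IntegrableOn (fun _ => q y0) I :=
    integrableOn_const (by rw [hvol]; exact ENNReal.ofReal_ne_top)
  have hmono2 : (fun _ => q y0) ≤ᵐ[volume.restrict I] q := by
    rw [Filter.EventuallyLE, ae_restrict_iff' hIm]
    filter_upwards [hae0] with y hy hyI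
    exact hbd y hyI hy
  have hsetint : (2*δ) * q y0 ≤ ∫ y in I, q y := by
    have := integral_mono_ae hIc hIq hmono2
    rwa [setIntegral_const, measureReal_def, hvol, ENNReal.toReal_ofReal h2δ.le, smul_eq_mul] at this
  have heq : (fun y => pt y * q y) = Set.indicator I (fun y => (2*δ)⁻¹ * q y) := by
    funext y
    by_cases hy : y ∈ I
    · simp [hpt, Set.indicator_of_mem hy]
    · simp [hpt, Set.indicator_of_notMem hy]
  refine ⟨pt, ⟨?_, ?_, ?_⟩, ?_, ?_⟩
  · exact (measurable_const.indicator hIm)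
  · intro y
    exact Set.indicator_nonneg (fun _ _ => by positivity) y
  · rw [hpt, integral_indicator hIm, setIntegral_const, measureReal_def, hvol,
      ENNReal.toReal_ofReal h2δ.le, smul_eq_mul]
    field_simp
  · rw [heq]
    exact ((hqi.const_mul _).indicator hIm)
  · rw [heq, integral_indicator hIm, integral_const_mul]
    calc c < q y0 := hcy0
      _ = (2*δ)⁻¹ * ((2*δ) * q y0) := by field_simp
      _ ≤ (2*δ)⁻¹ * ∫ y in I, q y := by
          apply mul_le_mul_of_nonneg_left hsetint (by positivity)
end

section
/- The normalized squared error S(Q,y) = (y − μ_Q)²/σ_Q², viewed via parameters (μ_Q, σ_Q²) ∈ ℝ × (0, m], has expected score under a nondegenerate P with finite second moment equal to (σ_P² + (μ_P − μ_Q)²)/σ_Q², which attains its minimum σ_P²/m exactly at μ_Q = μ_P, σ_Q² = m; relative to unbounded variances (0,∞) the infimum 0 is not attained. -/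
open MeasureTheory

/-- Example 8 (normalized squared error). For nondegenerate `P` with finite second
moment, mean `μP` and variance `σ2P > 0`, the expected score of the normalized
squared error with parameters `(m, v)` equals `(σ2P + (μP − m)²)/v`; over
`v ∈ (0, mbd]` it attains its minimum `σ2P/mbd` exactly at `m = μP`, `v = mbd`,
while over `v ∈ (0, ∞)` the infimum `0` is not attained. -/
theorem normalized_squared_error_bayes
    (P : Measure ℝ) (hP : IsProbabilityMeasure P)
    (h2 : Integrable (fun y => y ^ 2) P)
    (μP σ2P : ℝ) (hμ : μP = ∫ y, y ∂P)
    (hσ2 : σ2P = ∫ y, (y - μP) ^ 2 ∂P) (hσ2pos : 0 < σ2P)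
    (mbd : ℝ) (hmbd : 0 < mbd) :
    (∀ m v : ℝ, 0 < v →
        (∫ y, (y - m) ^ 2 ∂P) / v = (σ2P + (μP - m) ^ 2) / v) ∧
      (∀ m v : ℝ, 0 < v → v ≤ mbd →
        σ2P / mbd ≤ (σ2P + (μP - m) ^ 2) / v) ∧
      (∀ m v : ℝ, 0 < v → v ≤ mbd →
        (σ2P + (μP - m) ^ 2) / v = σ2P / mbd → m = μP ∧ v = mbd) ∧
      (∀ m v : ℝ, 0 < v → 0 < (σ2P + (μP - m) ^ 2) / v) ∧
      (∀ ε : ℝ, 0 < ε → ∃ m v : ℝ, 0 < v ∧ (σ2P + (μP - m) ^ 2) / v < ε) := by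
  have hy : Integrable (fun y => y) P := by
    refine (h2.add (integrable_const 1)).mono
      (aestronglyMeasurable_id) (Filter.Eventually.of_forall fun y => ?_)
    simp only [Pi.add_apply, Real.norm_eq_abs]
    have h' : |y ^ 2 + 1| = y ^ 2 + 1 := abs_of_nonneg (by positivity)
    rw [h']
    nlinarith [abs_nonneg y, sq_abs y]
  have keyf : ∀ m : ℝ, ∫ y, (y - m) ^ 2 ∂P = (∫ y, y ^ 2 ∂P) - 2 * m * μP + m ^ 2 := by
    intro m
    have h1 : (fun y : ℝ => (y - m) ^ 2)
        = fun y => (y ^ 2 + (-2 * m) * y) + m ^ 2 := by funext y; ring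
    have hi1 : Integrable (fun y : ℝ => y ^ 2 + -2 * m * y) P :=
      h2.add (hy.const_mul (-2 * m))
    rw [h1, integral_add hi1 (integrable_const _),
      integral_add h2 (hy.const_mul _), integral_const, MeasureTheory.integral_const_mul]
    simp [hP.measure_univ, ← hμ]
    ring
  have key : ∀ m : ℝ, ∫ y, (y - m) ^ 2 ∂P = σ2P + (μP - m) ^ 2 := by
    intro m
    have h0 := keyf μP
    rw [← hσ2] at h0
    rw [keyf m]
    nlinarith [h0]
  refine ⟨fun m v hv => by rw [key m], fun m v hv hvm => ?_, fun m v hv hvm heq => ?_,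
    fun m v hv => ?_, fun ε hε => ?_⟩
  · rw [div_le_div_iff₀ hmbd hv]
    nlinarith [sq_nonneg (μP - m)]
  · rw [div_eq_div_iff hv.ne' hmbd.ne'] at heq
    have ht : (μP - m) ^ 2 = 0 := by nlinarith [sq_nonneg (μP - m)]
    have hm : m = μP := by
      have := pow_eq_zero_iff (n := 2) (by norm_num) |>.mp ht
      linarith [sub_eq_zero.mp this]
    refine ⟨hm, ?_⟩
    rw [ht] at heq
    have : σ2P * v = σ2P * mbd := by nlinarith
    exact mul_left_cancel₀ (ne_of_gt hσ2pos) this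
  · exact div_pos (by positivity) hv
  · refine ⟨μP, 2 * σ2P / ε, by positivity, ?_⟩
    rw [div_lt_iff₀ (by positivity)]
    have : (μP - μP) ^ 2 = 0 := by ring
    rw [this]
    have h' : ε * (2 * σ2P / ε) = 2 * σ2P := by field_simp
    linarith
end
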